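/- Let t₀ ∈ ℂ with t₀ ≠ 0, let n ≥ 1 be a natural number, and let g be a function that is analytic on an open disc D centered at t₀ with g(t₀) = a ≠ 0. Suppose q(t) := g(t)/(t − t₀)ⁿ is nonvanishing on D ∖ {t₀} and satisfies equation (DPI): d²q/dt² = (3/q)(dq/dt)² − (t/2)q³ − 3/q on D ∖ {t₀}. Then n = 1 and t₀·a² = 2 (i.e. the leading coefficient is a = ±√(2t₀)/t₀). -/

import Mathlib

open Metric Filter Topology

private lemma inv_pow_hasDerivAt (m : ℕ) (t₀ x : ℂ) (hx : x ≠ t₀) :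
    HasDerivAt (fun y => ((y - t₀) ^ (m+1))⁻¹)
      (-((m:ℂ)+1) * ((x - t₀) ^ (m+2))⁻¹) x := by
  have hs : x - t₀ ≠ 0 := sub_ne_zero.mpr hx
  have h1 : HasDerivAt (fun y : ℂ => y - t₀) 1 x := (hasDerivAt_id x).sub_const t₀
  have h3 := (hasDerivAt_zpow (-((m:ℤ)+1)) (x - t₀) (Or.inl hs)).comp x h1
  simp only [Function.comp_def] at h3
  have hfun : (fun y : ℂ => (y - t₀) ^ (-((m:ℤ)+1))) = fun y => ((y - t₀) ^ (m+1))⁻¹ := by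
    funext y
    rw [show (-((m:ℤ)+1)) = -((m+1 : ℕ) : ℤ) by push_cast; ring, zpow_neg, zpow_natCast]
  rw [hfun] at h3
  refine h3.congr_deriv ?_
  rw [show (-((m:ℤ)+1) - 1) = -((m+2 : ℕ) : ℤ) by push_cast; ring, zpow_neg, zpow_natCast]
  push_cast
  ring

set_option maxHeartbeats 2000000 in
theorem DPI_leading_order_painleve_test
    (t₀ : ℂ) (ht₀ : t₀ ≠ 0) (n : ℕ) (hn : 1 ≤ n)
    (r : ℝ) (hr : 0 < r) (g : ℂ → ℂ)
    (hg : ∀ t ∈ Metric.ball t₀ r, AnalyticAt ℂ g t)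
    (a : ℂ) (ha : g t₀ = a) (hane : a ≠ 0)
    (q : ℂ → ℂ) (hq : ∀ t, q t = g t / (t - t₀) ^ n)
    (hqne : ∀ t ∈ Metric.ball t₀ r \ {t₀}, q t ≠ 0)
    (hode : ∀ t ∈ Metric.ball t₀ r \ {t₀}, deriv (deriv q) t =
      (3 / q t) * (deriv q t) ^ 2 - (t / 2) * (q t) ^ 3 - 3 / q t) :
    n = 1 ∧ t₀ * a ^ 2 = 2 := by
  obtain ⟨k, rfl⟩ : ∃ k, n = k + 1 := ⟨n - 1, by omega⟩
  set U := Metric.ball t₀ r \ {t₀} with hUdef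
  have hU : IsOpen U := Metric.isOpen_ball.sdiff isClosed_singleton
  have hqdef : q = fun x => g x * ((x - t₀) ^ (k+1))⁻¹ := by
    funext x; rw [hq x, div_eq_mul_inv]
  set G1 := deriv g with hG1def
  set G2 := deriv (deriv g) with hG2def
  have hG1a : AnalyticOnNhd ℂ G1 (Metric.ball t₀ r) := AnalyticOnNhd.deriv hg
  have hG2a : AnalyticOnNhd ℂ G2 (Metric.ball t₀ r) := AnalyticOnNhd.deriv hG1a
  set P1 : ℂ → ℂ := fun x => G1 x * ((x - t₀)^(k+1))⁻¹
      - ((k:ℂ)+1) * (g x * ((x - t₀)^(k+2))⁻¹) with hP1def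
  have hdq : ∀ x ∈ U, HasDerivAt q (P1 x) x := by
    intro x hx
    have hxne : x ≠ t₀ := hx.2
    have hgd : HasDerivAt g (G1 x) x := (hg x hx.1).differentiableAt.hasDerivAt
    have h := hgd.mul (inv_pow_hasDerivAt k t₀ x hxne)
    rw [hqdef]
    refine h.congr_deriv ?_
    simp only [hP1def]
    ring
  have hdP1 : ∀ x ∈ U, HasDerivAt P1
      (G2 x * ((x-t₀)^(k+1))⁻¹ - (2*(k:ℂ)+2) * (G1 x * ((x-t₀)^(k+2))⁻¹)
        + ((k:ℂ)+1)*((k:ℂ)+2) * (g x * ((x-t₀)^(k+3))⁻¹)) x := by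
    intro x hx
    have hxne : x ≠ t₀ := hx.2
    have hgd : HasDerivAt g (G1 x) x := (hg x hx.1).differentiableAt.hasDerivAt
    have hG1d : HasDerivAt G1 (G2 x) x := (hG1a x hx.1).differentiableAt.hasDerivAt
    have h1 := hG1d.mul (inv_pow_hasDerivAt k t₀ x hxne)
    have h2 := (hgd.mul (inv_pow_hasDerivAt (k+1) t₀ x hxne)).const_mul ((k:ℂ)+1)
    have h3 := h1.sub h2
    refine h3.congr_deriv ?_
    push_cast
    ring
  set Φ : ℂ → ℂ := fun x => (x-t₀)^(2*k) * ((g x * G2 x - 3 * (G1 x)^2) * (x-t₀)^2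
      + 4*((k:ℂ)+1) * (g x * G1 x) * (x-t₀)
      + ((k:ℂ)+1)*(1-2*((k:ℂ)+1)) * (g x)^2)
      + x/2 * (g x)^4 + 3*(x-t₀)^(4*k+4) with hΦdef
  have key : ∀ x ∈ U, Φ x = 0 := by
    intro x hx
    have hxne : x ≠ t₀ := hx.2
    have hs : x - t₀ ≠ 0 := sub_ne_zero.mpr hxne
    have hgne : g x ≠ 0 := by
      intro h0
      apply hqne x hx
      rw [hq x, h0, zero_div]
    have hq1 : deriv q x = P1 x := (hdq x hx).deriv
    have hq1e : deriv q =ᶠ[𝓝 x] P1 :=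
      Filter.eventuallyEq_of_mem (hU.mem_nhds hx) (fun y hy => (hdq y hy).deriv)
    have hq2 : deriv (deriv q) x = G2 x * ((x-t₀)^(k+1))⁻¹
        - (2*(k:ℂ)+2) * (G1 x * ((x-t₀)^(k+2))⁻¹)
        + ((k:ℂ)+1)*((k:ℂ)+2) * (g x * ((x-t₀)^(k+3))⁻¹) := by
      rw [hq1e.deriv_eq]; exact (hdP1 x hx).deriv
    have h2 : q x * deriv (deriv q) x - 3 * (deriv q x)^2 + x/2 * (q x)^4 + 3 = 0 := by
      rw [hode x hx]
      field_simp [hqne x hx]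
      ring
    rw [hq2, hq1, hqdef] at h2
    simp only [hP1def] at h2
    set y := (x - t₀)^(k+1) with hy
    have hyne : y ≠ 0 := pow_ne_zero _ hs
    have hI2 : ((x-t₀)^(k+2))⁻¹ = y⁻¹ * (x-t₀)⁻¹ := by
      rw [hy, ← mul_inv, ← pow_succ]
    have hI3 : ((x-t₀)^(k+3))⁻¹ = y⁻¹ * (x-t₀)⁻¹ * (x-t₀)⁻¹ := by
      rw [hy, ← mul_inv, ← mul_inv, ← pow_succ, ← pow_succ]
    rw [hI2, hI3] at h2
    have h3 : g x * G2 x * y^2 * (x-t₀)^2 - (2*(k:ℂ)+2) * (g x * G1 x) * y^2 * (x-t₀)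
        + ((k:ℂ)+1)*((k:ℂ)+2) * (g x)^2 * y^2
        - 3 * (G1 x * (x-t₀) - ((k:ℂ)+1) * g x)^2 * y^2
        + x/2 * (g x)^4 * (x-t₀)^2 + 3 * y^4 * (x-t₀)^2 = 0 := by
      have e1 : y * y⁻¹ = 1 := mul_inv_cancel₀ hyne
      have e2 : (x - t₀) * (x - t₀)⁻¹ = 1 := mul_inv_cancel₀ hs
      linear_combination ((x-t₀)^2 * y^4) * h2
        + (-(g x * G2 x - 3*(G1 x)^2) * (x-t₀)^2*y^2*(y*y⁻¹+1)
           - 4*((k:ℂ)+1)*(g x * G1 x)*y^2*(x-t₀)*(y*y⁻¹+1)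
           - ((k:ℂ)+1)*(-2*(k:ℂ)-1)*(g x)^2*y^2*(y*y⁻¹+1)
           - (x/2)*(g x)^4*(x-t₀)^2*(y*y⁻¹+1)*((y*y⁻¹)^2+1)) * e1
        + (-4*((k:ℂ)+1)*(g x * G1 x)*y^2*(x-t₀)*(y*y⁻¹)^2
           - ((k:ℂ)+1)*(-2*(k:ℂ)-1)*(g x)^2*y^2*(y*y⁻¹)^2*((x-t₀)*(x-t₀)⁻¹+1)) * e2
    have hpow1 : (x-t₀)^(2*k) * (x-t₀)^2 = y^2 := by
      rw [hy, ← pow_mul, ← pow_add]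
      congr 1
      ring
    have hpow2 : (x-t₀)^(4*k+4) = y^4 := by
      rw [hy, ← pow_mul]
      congr 1
      ring
    have h4 : (x-t₀)^2 * Φ x = 0 := by
      simp only [hΦdef]
      linear_combination h3 + ((g x * G2 x - 3 * (G1 x)^2) * (x-t₀)^2
        + 4*((k:ℂ)+1) * (g x * G1 x) * (x-t₀)
        + ((k:ℂ)+1)*(1-2*((k:ℂ)+1)) * (g x)^2) * hpow1 + 3 * (x-t₀)^2 * hpow2
    exact (mul_eq_zero.mp h4).resolve_left (pow_ne_zero 2 hs)
  have hb : t₀ ∈ Metric.ball t₀ r := Metric.mem_ball_self hr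
  have hΦcont : ContinuousAt Φ t₀ := by
    have h1 : ContinuousAt g t₀ := (hg t₀ hb).continuousAt
    have h2 : ContinuousAt G1 t₀ := (hG1a t₀ hb).continuousAt
    have h3 : ContinuousAt G2 t₀ := (hG2a t₀ hb).continuousAt
    simp only [hΦdef]
    fun_prop
  have hmemU : U ∈ 𝓝[≠] t₀ :=
    diff_mem_nhdsWithin_compl (Metric.ball_mem_nhds t₀ hr) {t₀}
  have hev : Φ =ᶠ[𝓝[≠] t₀] (fun _ => 0) := Filter.eventuallyEq_of_mem hmemU key
  have hlim1 : Filter.Tendsto Φ (𝓝[≠] t₀) (𝓝 (Φ t₀)) :=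
    hΦcont.tendsto.mono_left nhdsWithin_le_nhds
  have hlim2 : Filter.Tendsto Φ (𝓝[≠] t₀) (𝓝 0) :=
    Filter.Tendsto.congr' hev.symm tendsto_const_nhds
  have hΦ0 : Φ t₀ = 0 := tendsto_nhds_unique hlim1 hlim2
  simp only [hΦdef, sub_self] at hΦ0
  rcases Nat.eq_zero_or_pos k with hk | hk
  · subst hk
    norm_num at hΦ0
    rw [ha] at hΦ0
    refine ⟨rfl, ?_⟩
    have h5 : a^2 * (t₀ * a^2 - 2) = 0 := by linear_combination 2 * hΦ0
    rcases mul_eq_zero.mp h5 with h6 | h6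
    · exact absurd (pow_eq_zero_iff two_ne_zero |>.mp h6) hane
    · linear_combination h6
  · exfalso
    rw [zero_pow (by omega), zero_pow (by omega)] at hΦ0
    rw [ha] at hΦ0
    norm_num at hΦ0
    rcases hΦ0 with h6 | h6
    · exact ht₀ h6
    · exact hane h6
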